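/- Suppose Lie–Trotter splitting with exact sub-flows is applied to the error IVP Q' = G(t,Q), Q(0)=0 on [0,h], where G = G1 + G2, and that the rescaled functions Ḡν(t, q̄) = h^{−k} Gν(t, h^k q̄) correspond to sub-flows Q̄ν with Q̄ν uniquely solving the rescaled sub-problems. Then the Lie–Trotter approximation Q2(h) of Q(h) satisfies Q2(h) = h^k Q̄2(h), where Q̄2(h) is the Lie–Trotter approximation of the rescaled problem. Consequently, if the rescaled Lie–Trotter error is O(h²), the unscaled error Q(h) − Q2(h) is O(h^{k+2}). -/

import Mathlib

open Set

/-- Commutation of the `h^k` rescaling with exact Lie–Trotter splitting of the error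
IVP `Q' = G1(t,Q) + G2(t,Q)`, `Q(0)=0`: the Lie–Trotter approximation satisfies
`Q2(h) = h^k Q̄2(h)`, and hence an `O(h²)` rescaled splitting error gives an
`O(h^{k+2})` unscaled error. -/
theorem stmt_6 (n : ℕ) (k : ℕ) (hk : 1 ≤ k) (h : ℝ) (hh : 0 < h)
    (G1 G2 : ℝ → EuclideanSpace ℝ (Fin n) → EuclideanSpace ℝ (Fin n))
    (Gbar1 Gbar2 : ℝ → EuclideanSpace ℝ (Fin n) → EuclideanSpace ℝ (Fin n))
    (hGbar1 : ∀ t q, Gbar1 t q = (h ^ k)⁻¹ • G1 t ((h ^ k) • q))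
    (hGbar2 : ∀ t q, Gbar2 t q = (h ^ k)⁻¹ • G2 t ((h ^ k) • q))
    -- unscaled Lie–Trotter sub-flows
    (Q1 Q2 : ℝ → EuclideanSpace ℝ (Fin n))
    (hQ1_0 : Q1 0 = 0)
    (hQ1 : ∀ t ∈ Icc (0:ℝ) h, HasDerivAt Q1 (G1 t (Q1 t)) t)
    (hQ2_0 : Q2 0 = Q1 h)
    (hQ2 : ∀ t ∈ Icc (0:ℝ) h, HasDerivAt Q2 (G2 t (Q2 t)) t)
    -- rescaled Lie–Trotter sub-flows
    (Qbar1 Qbar2 : ℝ → EuclideanSpace ℝ (Fin n))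
    (hQbar1_0 : Qbar1 0 = 0)
    (hQbar1 : ∀ t ∈ Icc (0:ℝ) h, HasDerivAt Qbar1 (Gbar1 t (Qbar1 t)) t)
    (hQbar2_0 : Qbar2 0 = Qbar1 h)
    (hQbar2 : ∀ t ∈ Icc (0:ℝ) h, HasDerivAt Qbar2 (Gbar2 t (Qbar2 t)) t)
    -- uniqueness of the rescaled sub-flows
    (huniq1 : ∀ R : ℝ → EuclideanSpace ℝ (Fin n), R 0 = 0 →
      (∀ t ∈ Icc (0:ℝ) h, HasDerivAt R (Gbar1 t (R t)) t) → ∀ t ∈ Icc (0:ℝ) h, R t = Qbar1 t)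
    (huniq2 : ∀ R : ℝ → EuclideanSpace ℝ (Fin n), R 0 = Qbar1 h →
      (∀ t ∈ Icc (0:ℝ) h, HasDerivAt R (Gbar2 t (R t)) t) → ∀ t ∈ Icc (0:ℝ) h, R t = Qbar2 t) :
    Q2 h = (h ^ k) • Qbar2 h ∧
    ∀ (Q : ℝ → EuclideanSpace ℝ (Fin n)) (C : ℝ), Q 0 = 0 →
      (∀ t ∈ Icc (0:ℝ) h, HasDerivAt Q (G1 t (Q t) + G2 t (Q t)) t) →
      ‖(h ^ k)⁻¹ • Q h - Qbar2 h‖ ≤ C * h ^ 2 →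
      ‖Q h - Q2 h‖ ≤ C * h ^ (k + 2) := by
  have hne : (h ^ k : ℝ) ≠ 0 := by positivity
  have hcancel : ∀ x : EuclideanSpace ℝ (Fin n), (h ^ k) • (h ^ k)⁻¹ • x = x := by
    intro x; rw [smul_smul, mul_inv_cancel₀ hne, one_smul]
  have hmem : h ∈ Icc (0:ℝ) h := ⟨le_of_lt hh, le_refl h⟩
  have hQbar1h : (h ^ k)⁻¹ • Q1 h = Qbar1 h := by
    refine huniq1 (fun t => (h ^ k)⁻¹ • Q1 t) (by simp [hQ1_0]) ?_ h hmem
    intro t ht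
    have := (hQ1 t ht).const_smul ((h ^ k)⁻¹)
    rw [hGbar1]; beta_reduce; rw [hcancel]
    exact this
  have hQbar2h : (h ^ k)⁻¹ • Q2 h = Qbar2 h := by
    refine huniq2 (fun t => (h ^ k)⁻¹ • Q2 t) (by simp [hQ2_0, hQbar1h]) ?_ h hmem
    intro t ht
    have := (hQ2 t ht).const_smul ((h ^ k)⁻¹)
    rw [hGbar2]; beta_reduce; rw [hcancel]
    exact this
  have key : Q2 h = (h ^ k) • Qbar2 h := by rw [← hQbar2h, hcancel]
  refine ⟨key, ?_⟩
  intro Q C hQ0 hQd hb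
  have : Q h - Q2 h = (h ^ k) • ((h ^ k)⁻¹ • Q h - Qbar2 h) := by
    rw [smul_sub, hcancel, key]
  rw [this, norm_smul]
  have hnorm : ‖(h ^ k : ℝ)‖ = h ^ k := by
    rw [Real.norm_eq_abs, abs_of_pos (by positivity)]
  rw [hnorm]
  calc h ^ k * ‖(h ^ k)⁻¹ • Q h - Qbar2 h‖ ≤ h ^ k * (C * h ^ 2) := by
        exact mul_le_mul_of_nonneg_left hb (by positivity)
    _ = C * h ^ (k + 2) := by ring
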